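/- The family 𝒞 of all cuts of a family 𝒮 ⊆ 2^V is laminar: any two cuts C, C' ∈ 𝒞 satisfy C ⊆ C', C' ⊆ C, or C ∩ C' = ∅; consequently |𝒞| ≤ 2|V|. -/

import Mathlib

/-- `S` intersects `C` (crossingly): `S∩C`, `C\S`, `S\C` all nonempty. -/
def Crosses {V : Type*} (S C : Set V) : Prop :=
  (S ∩ C).Nonempty ∧ (C \ S).Nonempty ∧ (S \ C).Nonempty

/-- `C` is a cut of `𝒮`: a member of `𝒮` with `2 ≤ |C| ≤ |V|-1` that intersects
no other member of `𝒮`. -/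
def IsCutMember {V : Type*} [Fintype V] (𝒮 : Set (Set V)) (C : Set V) : Prop :=
  C ∈ 𝒮 ∧ 2 ≤ C.ncard ∧ C.ncard ≤ Fintype.card V - 1 ∧
    ∀ S ∈ 𝒮, S ≠ C → ¬ Crosses S C

/-- A laminar family of sets of size at least 2 inside a finite ground set `U`
has at most `|U|` members. -/
lemma laminar_ncard_le {α : Type*} :
    ∀ (n : ℕ) (𝒞 : Set (Set α)) (U : Set α), U.Finite → 𝒞.Finite → 𝒞.ncard = n →
    (∀ C ∈ 𝒞, C ⊆ U) → (∀ C ∈ 𝒞, 2 ≤ C.ncard) →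
    (∀ C ∈ 𝒞, ∀ C' ∈ 𝒞, C ⊆ C' ∨ C' ⊆ C ∨ C ∩ C' = ∅) →
    𝒞.ncard ≤ U.ncard := by
  intro n
  induction n using Nat.strong_induction_on with
  | _ n IH =>
    intro 𝒞 U hU h𝒞 hcard hsub hbig hlam
    rcases Nat.eq_zero_or_pos n with h0 | hpos
    · omega
    -- 𝒞 is nonempty; pick a ⊆-minimal member m
    have hne : 𝒞.Nonempty := by
      rw [Set.nonempty_iff_ne_empty]
      intro h; rw [h] at hcard; simp at hcard; omega
    obtain ⟨m, hm, hmin⟩ : ∃ m ∈ 𝒞, ∀ a' ∈ 𝒞, id a' ≤ id m → id m = id a' := by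
      obtain ⟨m, hm⟩ := h𝒞.exists_minimal hne
      exact ⟨m, hm.prop, fun a ha hle => (hm.eq_of_le ha hle).symm⟩
    simp only [id] at hmin
    have hmfin : m.Finite := hU.subset (hsub m hm)
    -- two distinct elements of m
    obtain ⟨x, y, hxm, hym, hxy⟩ := (Set.one_lt_ncard_iff hmfin).mp (by
      have := hbig m hm; omega)
    -- any other member meeting m contains m
    have key : ∀ C ∈ 𝒞, C ≠ m → (C ∩ m).Nonempty → m ⊆ C := by
      intro C hC hCm hmeet
      rcases hlam C hC m hm with h | h | h
      · exact absurd (hmin C hC h).symm hCm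
      · exact h
      · rw [h] at hmeet; exact absurd hmeet (by simp)
    -- membership of x resp. y characterises containing m
    have hxmem : ∀ C ∈ 𝒞, C ≠ m → (x ∈ C ↔ m ⊆ C) := by
      intro C hC hCm
      exact ⟨fun hx => key C hC hCm ⟨x, hx, hxm⟩, fun h => h hxm⟩
    have hymem : ∀ C ∈ 𝒞, C ≠ m → (y ∈ C ↔ m ⊆ C) := by
      intro C hC hCm
      exact ⟨fun hy => key C hC hCm ⟨y, hy, hym⟩, fun h => h hym⟩
    -- the contracted family
    set 𝒞' : Set (Set α) := (fun C => C \ {y}) '' (𝒞 \ {m}) with h𝒞'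
    have hinj : Set.InjOn (fun C => C \ {y}) (𝒞 \ {m}) := by
      intro C hC C' hC' h
      simp only at h
      obtain ⟨hC1, hC2⟩ := hC
      obtain ⟨hC'1, hC'2⟩ := hC'
      simp only [Set.mem_singleton_iff] at hC2 hC'2
      have hx : x ∈ C ↔ x ∈ C' := by
        constructor
        · intro hxC
          have : x ∈ C' \ {y} := h ▸ (Set.mem_diff_singleton.mpr ⟨hxC, hxy⟩)
          exact this.1
        · intro hxC
          have : x ∈ C \ {y} := h ▸ (Set.mem_diff_singleton.mpr ⟨hxC, hxy⟩)
          exact this.1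
      have hy : y ∈ C ↔ y ∈ C' := by
        rw [hxmem C hC1 hC2, hxmem C' hC'1 hC'2] at hx
        rw [hymem C hC1 hC2, hymem C' hC'1 hC'2, hx]
      ext z
      rcases eq_or_ne z y with rfl | hz
      · exact hy
      · constructor
        · intro hzC
          have : z ∈ C' \ {y} := h ▸ (Set.mem_diff_singleton.mpr ⟨hzC, hz⟩)
          exact this.1
        · intro hzC
          have : z ∈ C \ {y} := h ▸ (Set.mem_diff_singleton.mpr ⟨hzC, hz⟩)
          exact this.1
    have hdiff_fin : (𝒞 \ {m}).Finite := h𝒞.diff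
    have h𝒞'fin : 𝒞'.Finite := hdiff_fin.image _
    have hcard' : 𝒞'.ncard = (𝒞 \ {m}).ncard := Set.ncard_image_of_injOn hinj
    have hcm : (𝒞 \ {m}).ncard + 1 = 𝒞.ncard := by
      have := Set.ncard_diff_singleton_add_one hm h𝒞
      simpa using this
    -- apply the inductive hypothesis to 𝒞' and U \ {y}
    have hUy : (U \ {y}).Finite := hU.diff
    have hstep : 𝒞'.ncard ≤ (U \ {y}).ncard := by
      apply IH 𝒞'.ncard (by omega) 𝒞' (U \ {y}) hUy h𝒞'fin rfl
      · rintro _ ⟨C, ⟨hC, hCm⟩, rfl⟩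
        exact Set.diff_subset_diff_left (hsub C hC)
      · rintro _ ⟨C, ⟨hC, hCm⟩, rfl⟩
        simp only [Set.mem_singleton_iff] at hCm
        by_cases hyC : y ∈ C
        · have hmC : m ⊆ C := (hymem C hC hCm).mp hyC
          have hCfin : C.Finite := hU.subset (hsub C hC)
          have hssub : m ⊂ C := ⟨hmC, fun h => hCm (Set.Subset.antisymm h hmC)⟩
          have h3 : m.ncard < C.ncard := Set.ncard_lt_ncard hssub hCfin
          have h2 : 2 ≤ m.ncard := hbig m hm
          have := Set.ncard_diff_singleton_add_one hyC hCfin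
          simp only at this ⊢
          omega
        · simp only
          rw [Set.diff_singleton_eq_self hyC]
          exact hbig C hC
      · rintro _ ⟨C, ⟨hC, _⟩, rfl⟩ _ ⟨C', ⟨hC', _⟩, rfl⟩
        rcases hlam C hC C' hC' with h | h | h
        · exact Or.inl (Set.diff_subset_diff_left h)
        · exact Or.inr (Or.inl (Set.diff_subset_diff_left h))
        · refine Or.inr (Or.inr (Set.subset_empty_iff.mp ?_))
          simp only
          calc C \ {y} ∩ (C' \ {y}) ⊆ C ∩ C' :=
                Set.inter_subset_inter Set.diff_subset Set.diff_subset
            _ = ∅ := h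
    have hyU : y ∈ U := hsub m hm hym
    have hUcard := Set.ncard_diff_singleton_add_one hyU hU
    omega

/-- The family of all cuts of `𝒮` is laminar, and hence has at most `2|V|` members. -/
theorem cuts_laminar_and_card_le
    {V : Type*} [Fintype V] (𝒮 : Set (Set V)) :
    (∀ C C', IsCutMember 𝒮 C → IsCutMember 𝒮 C' →
      C ⊆ C' ∨ C' ⊆ C ∨ C ∩ C' = ∅) ∧
    {C : Set V | IsCutMember 𝒮 C}.ncard ≤ 2 * Fintype.card V := by
  have hlam : ∀ C C', IsCutMember 𝒮 C → IsCutMember 𝒮 C' →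
      C ⊆ C' ∨ C' ⊆ C ∨ C ∩ C' = ∅ := by
    intro C C' hC hC'
    by_contra h
    push_neg at h
    obtain ⟨h1, h2, h3⟩ := h
    have hne : C ≠ C' := fun h => h1 (h ▸ subset_rfl)
    have hcross : Crosses C C' := by
      refine ⟨h3, ?_, ?_⟩
      · obtain ⟨z, hz⟩ := Set.not_subset.mp h2
        exact ⟨z, hz.1, hz.2⟩
      · obtain ⟨z, hz⟩ := Set.not_subset.mp h1
        exact ⟨z, hz.1, hz.2⟩
    exact hC'.2.2.2 C hC.1 hne hcross
  refine ⟨hlam, ?_⟩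
  have h1 : {C : Set V | IsCutMember 𝒮 C}.ncard ≤ (Set.univ : Set V).ncard := by
    apply laminar_ncard_le _ _ _ Set.finite_univ (Set.toFinite _) rfl
    · intro C _; exact Set.subset_univ C
    · intro C hC; exact hC.2.1
    · intro C hC C' hC'; exact hlam C C' hC hC'
  rw [Set.ncard_univ, Nat.card_eq_fintype_card] at h1
  omega
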